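/- Let (X,G) be a small Polish structure with X uncountable, and let H be a nontrivial countable group. Then in the small Polish group structure (H(X),G), no orbit is nm-generic: for every a ∈ H(X) and every finite A ⊆ H(X), the orbit o(a/A) is neither left nm-generic nor right nm-generic. -/

import Mathlib

open Function

variable (X H : Type*)

/-- `H(X)`: the direct sum of copies of `H` indexed by `X`, realized as the subgroup of
the product group `X → H` consisting of finitely supported functions. -/
def FinSupp [Group H] : Subgroup (X → H) where
  carrier := {f | (Function.mulSupport f).Finite}
  one_mem' := by simp [Function.mulSupport_one]
  mul_mem' {f g} hf hg := (hf.union hg).subset (Function.mulSupport_mul f g)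
  inv_mem' {f} hf := by simpa [Function.mulSupport_inv] using hf

variable (G : Type*) [Group G] [Group H] [MulAction G X]

/-- The action of `G` on `H(X)` given by `(g • y) x = y (g⁻¹ • x)`. -/
instance : MulAction G ↥(FinSupp X H) where
  smul g y := ⟨fun x => (y : X → H) (g⁻¹ • x), by
    show (Function.mulSupport ((y : X → H) ∘ (fun x => g⁻¹ • x))).Finite
    rw [Function.mulSupport_comp_eq_preimage]
    exact y.2.preimage ((MulAction.injective (g⁻¹ : G)).injOn)⟩
  one_smul y := Subtype.ext <| funext fun x => by
    show (y : X → H) ((1 : G)⁻¹ • x) = (y : X → H) x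
    rw [inv_one, one_smul]
  mul_smul g₁ g₂ y := Subtype.ext <| funext fun x => by
    show (y : X → H) ((g₁ * g₂)⁻¹ • x) = (y : X → H) (g₂⁻¹ • g₁⁻¹ • x)
    rw [mul_inv_rev, mul_smul]

lemma smul_finSupp_apply (g : G) (y : ↥(FinSupp X H)) (x : X) :
    ((g • y : ↥(FinSupp X H)) : X → H) x = (y : X → H) (g⁻¹ • x) := rfl

/-- The pointwise stabilizer of a set `A ⊆ X` in `G`. -/
def fixPt (G : Type*) [Group G] (X : Type*) [MulAction G X] (A : Set X) : Subgroup G where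
  carrier := {g | ∀ x ∈ A, g • x = x}
  one_mem' := fun x _ => one_smul G x
  mul_mem' {a b} ha hb := fun x hx => by rw [mul_smul, hb x hx, ha x hx]
  inv_mem' {a} ha := fun x hx => by
    conv_lhs => rw [← ha x hx]
    rw [inv_smul_smul]

/-- The orbit `o(a/A)` of a finite tuple `a` over a set `A`: the orbit of `a` under the
pointwise stabilizer `G_A`, acting diagonally. -/
def orbitOver (G : Type*) [Group G] (X : Type*) [MulAction G X] {n : ℕ}
    (A : Set X) (a : Fin n → X) : Set (Fin n → X) :=
  {b | ∃ g ∈ fixPt G X A, (fun i => g • a i) = b}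

/-- `a` is nm-independent from `B` over `A` (written `a ⫝_A B`): the set of those `g` in the
pointwise stabilizer `G_A` with `g • a ∈ o(a/A ∪ B)` is non-meager in `G_A` (carrying the
subspace topology from `G`). -/
def NMIndep (G : Type*) [Group G] [TopologicalSpace G] (X : Type*) [MulAction G X]
    {n : ℕ} (a : Fin n → X) (A B : Set X) : Prop :=
  ¬ IsMeagre {g : ↥(fixPt G X A) | (fun i => (g : G) • a i) ∈ orbitOver G X (A ∪ B) a}

/-- `a ⫝_A B` for a single element `a`. -/
def NMIndep1 (G : Type*) [Group G] [TopologicalSpace G] (X : Type*) [MulAction G X]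
    (a : X) (A B : Set X) : Prop :=
  NMIndep G X (fun _ : Fin 1 => a) A B

/-- `Ã ⊆ X` for a set `A ⊆ H(X)`: the union of the supports of the members of `A`. -/
def tildeSet (A : Set ↥(FinSupp X H)) : Set X :=
  ⋃ y ∈ A, Function.mulSupport (y : X → H)


section AuxGen

open Function Set TopologicalSpace

lemma isMeagre_image_homeomorph {α β : Type*} [TopologicalSpace α] [TopologicalSpace β]
    (e : α ≃ₜ β) {s : Set α} (hs : IsMeagre s) : IsMeagre (e '' s) := by
  rw [isMeagre_iff_countable_union_isNowhereDense] at hs ⊢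
  obtain ⟨S, hnd, hSc, hsub⟩ := hs
  refine ⟨(Set.image e) '' S, ?_, hSc.image _, ?_⟩
  · rintro _ ⟨u, hu, rfl⟩
    have h1 := hnd u hu
    unfold IsNowhereDense at h1 ⊢
    rw [← e.image_closure, ← e.image_interior, h1, Set.image_empty]
  · rintro _ ⟨w, hw, rfl⟩
    obtain ⟨u, huS, hwu⟩ := hsub hw
    exact ⟨e '' u, ⟨u, huS, rfl⟩, ⟨w, hwu, rfl⟩⟩

lemma not_isMeagre_univ {α : Type*} [TopologicalSpace α] [BaireSpace α] [Nonempty α] :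
    ¬ IsMeagre (univ : Set α) := fun h => by
  rw [IsMeagre, compl_univ] at h
  exact absurd (dense_of_mem_residual h).nonempty (by simp)

lemma exists_nonMeagre_fiber {α ι : Type*} [TopologicalSpace α] [BaireSpace α] [Nonempty α]
    [Countable ι] (f : α → ι) : ∃ i, ¬ IsMeagre (f ⁻¹' {i}) := by
  by_contra hc
  push_neg at hc
  apply not_isMeagre_univ (α := α)
  have huniv : (univ : Set α) = ⋃ i, f ⁻¹' {i} := by ext z; simp
  rw [huniv, IsMeagre, compl_iUnion]
  exact countable_iInter_mem.2 fun i => hc i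

lemma countable_orbit_of_interior {T σ : Type*} [Group T] [TopologicalSpace T]
    [IsTopologicalGroup T] [SeparableSpace T] [MulAction T σ] (s : σ)
    (h : (interior {t : T | t • s = s}).Nonempty) :
    (Set.range fun t : T => t • s).Countable := by
  obtain ⟨u, hu⟩ := h
  have hus : u ∈ {t : T | t • s = s} := interior_subset hu
  replace hus : u • s = s := hus
  obtain ⟨D, hDc, hDd⟩ := TopologicalSpace.exists_countable_dense T
  refine Set.Countable.mono ?_ (hDc.image (fun d => d • s))
  rintro _ ⟨g, rfl⟩
  have hV : IsOpen {z : T | g⁻¹ * z * u ∈ interior {t : T | t • s = s}} :=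
    isOpen_interior.preimage ((continuous_const.mul continuous_id).mul continuous_const)
  have hgV : g ∈ {z : T | g⁻¹ * z * u ∈ interior {t : T | t • s = s}} := by
    simpa using hu
  obtain ⟨d, hdD, hdV⟩ := hDd.exists_mem_open hV ⟨g, hgV⟩
  refine ⟨d, hdD, ?_⟩
  have hw : (g⁻¹ * d * u) ∈ {t : T | t • s = s} := interior_subset hdV
  replace hw : (g⁻¹ * d * u) • s = s := hw
  have hd : d = g * (g⁻¹ * d * u) * u⁻¹ := by group
  show d • s = g • s
  calc d • s = (g * (g⁻¹ * d * u) * u⁻¹) • s := by rw [← hd]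
    _ = g • ((g⁻¹ * d * u) • (u⁻¹ • s)) := by rw [mul_smul, mul_smul]
    _ = g • s := by rw [inv_smul_eq_iff.mpr hus.symm, hw]

lemma isMeagre_coset {T σ : Type*} [Group T] [TopologicalSpace T] [IsTopologicalGroup T]
    [SeparableSpace T] [MulAction T σ] {s : σ} (w : σ)
    (hcl : IsClosed {t : T | t • s = s})
    (hunc : ¬ (Set.range fun t : T => t • s).Countable) :
    IsMeagre {t : T | t • s = w} := by
  rcases Set.eq_empty_or_nonempty {t : T | t • s = w} with he | ⟨g₀, hg₀⟩
  · rw [he]; exact IsMeagre.empty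
  have hg₀' : g₀ • s = w := hg₀
  have hset : {t : T | t • s = w} = (fun z : T => g₀⁻¹ * z) ⁻¹' {t : T | t • s = s} := by
    ext g
    simp only [Set.mem_setOf_eq, Set.mem_preimage]
    rw [mul_smul, inv_smul_eq_iff, hg₀']
  have hset2 : {t : T | t • s = s} = (fun z : T => g₀ * z) ⁻¹' {t : T | t • s = w} := by
    ext g
    simp only [Set.mem_setOf_eq, Set.mem_preimage]
    rw [mul_smul, ← hg₀']
    constructor
    · intro hg; rw [hg]
    · intro hg; exact smul_left_cancel g₀ hg
  have hclw : IsClosed {t : T | t • s = w} := by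
    rw [hset]
    exact hcl.preimage (continuous_const.mul continuous_id)
  have hint : interior {t : T | t • s = w} = ∅ := by
    by_contra hne
    obtain ⟨z, hz⟩ := Set.nonempty_iff_ne_empty.2 hne
    apply hunc
    apply countable_orbit_of_interior s
    refine ⟨g₀⁻¹ * z, ?_⟩
    rw [hset2]
    show g₀⁻¹ * z ∈ interior (⇑(Homeomorph.mulLeft g₀) ⁻¹' {t : T | t • s = w})
    rw [← Homeomorph.preimage_interior]
    show g₀ * (g₀⁻¹ * z) ∈ interior {t : T | t • s = w}
    rwa [mul_inv_cancel_left]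
  refine isMeagre_iff_countable_union_isNowhereDense.2
    ⟨{{t : T | t • s = w}}, ?_, countable_singleton _, ?_⟩
  · intro u hu
    rw [Set.mem_singleton_iff] at hu
    subst hu
    rw [IsNowhereDense, hclw.closure_eq]
    exact hint
  · simp

lemma aux_exists_uncountable_fiber {α Q : Type*} [Uncountable α] [Countable Q] (f : α → Q) :
    ∃ x : α, ¬ (f ⁻¹' {f x}).Countable := by
  by_contra hc
  push_neg at hc
  have hcount : (Set.univ : Set α).Countable := by
    refine Set.Countable.mono (fun z _ => Set.mem_iUnion.2 ⟨f z, rfl⟩ :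
      (Set.univ : Set α) ⊆ ⋃ q : Q, f ⁻¹' {q}) (Set.countable_iUnion fun q => ?_)
    by_cases hq : ∃ z, f z = q
    · obtain ⟨z, rfl⟩ := hq
      exact hc z
    · have : f ⁻¹' {q} = ∅ := by
        ext z; simp only [Set.mem_preimage, Set.mem_singleton_iff, Set.mem_empty_iff_false,
          iff_false]
        exact fun h => hq ⟨z, h⟩
      rw [this]; exact Set.countable_empty
  exact absurd hcount (Set.not_countable_univ_iff.mpr inferInstance)

end AuxGen

section AuxSpec

open Function Set TopologicalSpace
open scoped Classical

variable {X H G}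

lemma aux_supp_finite (y : ↥(FinSupp X H)) : (Function.mulSupport (y : X → H)).Finite := y.2

lemma mem_fixPt {G : Type*} [Group G] {σ : Type*} [MulAction G σ] {A : Set σ} {g : G} :
    g ∈ fixPt G σ A ↔ ∀ x ∈ A, g • x = x := Iff.rfl

lemma aux_fix_apply {g : G} {y : ↥(FinSupp X H)} (hg : g • y = y) (z : X) :
    (y : X → H) (g • z) = (y : X → H) z := by
  have h : ((g • y : ↥(FinSupp X H)) : X → H) (g • z) = (y : X → H) (g • z) := by rw [hg]
  rw [smul_finSupp_apply, inv_smul_smul] at h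
  exact h.symm

lemma aux_smul_eq_self {g : G} {y : ↥(FinSupp X H)}
    (h : ∀ x ∈ Function.mulSupport (y : X → H), (y : X → H) (g • x) = (y : X → H) x) :
    g • y = y := by
  apply Subtype.ext; funext z
  rw [smul_finSupp_apply]
  have hmaps : Set.MapsTo (fun x => g • x) (Function.mulSupport (y : X → H))
      (Function.mulSupport (y : X → H)) := by
    intro x hx
    have hne : (y : X → H) (g • x) ≠ 1 := by rw [h x hx]; exact hx
    exact hne
  have hinj : Set.InjOn (fun x => g • x) (Function.mulSupport (y : X → H)) :=
    (MulAction.injective g).injOn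
  have hbij := ((aux_supp_finite y).injOn_iff_bijOn_of_mapsTo hmaps).1 hinj
  by_cases hz : z ∈ Function.mulSupport (y : X → H)
  · obtain ⟨x, hxF, hxz⟩ := hbij.surjOn hz
    have hx' : g⁻¹ • z = x := by rw [← hxz]; exact inv_smul_smul g x
    rw [hx', ← hxz]
    exact (h x hxF).symm
  · have hz' : g⁻¹ • z ∉ Function.mulSupport (y : X → H) := by
      intro hmem
      apply hz
      have h2 := hmaps hmem
      simpa [smul_inv_smul] using h2
    rw [Function.notMem_mulSupport.1 hz', Function.notMem_mulSupport.1 hz]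

lemma aux_fix_of_fix_support {g : G} {y : ↥(FinSupp X H)}
    (h : ∀ x ∈ Function.mulSupport (y : X → H), g • x = x) : g • y = y :=
  aux_smul_eq_self fun x hx => by rw [h x hx]

lemma aux_isClosed_smul_eq [TopologicalSpace G] [IsTopologicalGroup G]
    (hstab : ∀ x : X, IsClosed {g : G | g • x = x}) (x w : X) :
    IsClosed {g : G | g • x = w} := by
  rcases Set.eq_empty_or_nonempty {g : G | g • x = w} with he | ⟨g₀, hg₀⟩
  · rw [he]; exact isClosed_empty
  · have hg₀' : g₀ • x = w := hg₀
    have hrw : {g : G | g • x = w} = (fun g : G => g₀⁻¹ * g) ⁻¹' {g : G | g • x = x} := by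
      ext g
      simp only [Set.mem_setOf_eq, Set.mem_preimage]
      rw [mul_smul, inv_smul_eq_iff, hg₀']
    rw [hrw]
    exact (hstab x).preimage (continuous_const.mul continuous_id)

lemma aux_isClosed_stab [TopologicalSpace G] [IsTopologicalGroup G]
    (hstab : ∀ x : X, IsClosed {g : G | g • x = x}) (y : ↥(FinSupp X H)) :
    IsClosed {g : G | g • y = y} := by
  have hrw : {g : G | g • y = y} =
      ⋂ x ∈ Function.mulSupport (y : X → H),
        ⋃ w ∈ (y : X → H) ⁻¹' {(y : X → H) x} ∩ Function.mulSupport (y : X → H),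
          {g : G | g • x = w} := by
    ext g
    simp only [Set.mem_setOf_eq, Set.mem_iInter, Set.mem_iUnion, Set.mem_inter_iff,
      Set.mem_preimage, Set.mem_singleton_iff]
    constructor
    · intro hg x hx
      refine ⟨g • x, ⟨aux_fix_apply hg x, ?_⟩, rfl⟩
      rw [Function.mem_mulSupport, aux_fix_apply hg x]
      exact hx
    · intro hg
      apply aux_smul_eq_self
      intro x hx
      obtain ⟨w, ⟨hw1, _⟩, hw2⟩ := hg x hx
      rw [hw2, hw1]
  rw [hrw]
  refine isClosed_biInter fun x hx => ?_
  refine Set.Finite.isClosed_biUnion ((aux_supp_finite y).subset Set.inter_subset_right)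
    fun w _ => aux_isClosed_smul_eq hstab x w

lemma aux_isClosed_fixPt [TopologicalSpace G] [IsTopologicalGroup G]
    (hstab : ∀ x : X, IsClosed {g : G | g • x = x}) (A : Set ↥(FinSupp X H)) :
    IsClosed ((fixPt G ↥(FinSupp X H) A : Subgroup G) : Set G) := by
  have hrw : ((fixPt G ↥(FinSupp X H) A : Subgroup G) : Set G) = ⋂ y ∈ A, {g : G | g • y = y} := by
    ext g
    simp only [SetLike.mem_coe, Set.mem_iInter, Set.mem_setOf_eq]
    exact mem_fixPt
  rw [hrw]
  exact isClosed_biInter fun y _ => aux_isClosed_stab hstab y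

lemma aux_delta_stab {x' : X} {h₀ : H} (hh : h₀ ≠ 1) {g : G}
    (b : ↥(FinSupp X H)) (hb : (b : X → H) = fun z => if z = x' then h₀ else 1) :
    g • b = b ↔ g • x' = x' := by
  constructor
  · intro hg
    have h1 := aux_fix_apply hg x'
    rw [hb] at h1
    simp only [if_pos rfl] at h1
    by_contra hne
    rw [if_neg hne] at h1
    exact hh h1.symm
  · intro hg
    apply Subtype.ext; funext z
    rw [smul_finSupp_apply, hb]
    have hiff : g⁻¹ • z = x' ↔ z = x' := by rw [inv_smul_eq_iff, hg]
    show (if g⁻¹ • z = x' then h₀ else 1) = (if z = x' then h₀ else 1)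
    by_cases hz : z = x'
    · rw [if_pos (hiff.mpr hz), if_pos hz]
    · rw [if_neg (fun hc => hz (hiff.mp hc)), if_neg hz]

lemma aux_fiber {m : ℕ} (t : Fin m → X) {u v : X}
    (h : (Quotient.mk (MulAction.orbitRel G (Fin (m+1) → X)) (Fin.cons u t)) =
      Quotient.mk (MulAction.orbitRel G (Fin (m+1) → X)) (Fin.cons v t)) :
    ∃ g : G, (∀ i, g • t i = t i) ∧ g • v = u := by
  obtain ⟨g, hg⟩ := Quotient.exact h
  have hg2 : g • (Fin.cons v t : Fin (m+1) → X) = (Fin.cons u t : Fin (m+1) → X) := hg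
  refine ⟨g, fun i => ?_, ?_⟩
  · have h3 := congrFun hg2 i.succ
    rwa [Pi.smul_apply, Fin.cons_succ, Fin.cons_succ] at h3
  · have h3 := congrFun hg2 0
    rwa [Pi.smul_apply, Fin.cons_zero, Fin.cons_zero] at h3

end AuxSpec


open Function Set TopologicalSpace in
open scoped Classical in
lemma aux_dep {X H G : Type*} [Group H] [Group G] [MulAction G X]
    [TopologicalSpace G] [IsTopologicalGroup G] [PolishSpace G]
    (hstab : ∀ x : X, IsClosed {g : G | g • x = x})
    {x' : X} (hunc : ¬ (MulAction.orbit G x').Countable)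
    {h₀ : H} (hh₀ : h₀ ≠ 1)
    (b : ↥(FinSupp X H)) (hbval : (b : X → H) = fun z => if z = x' then h₀ else 1)
    (B : Set ↥(FinSupp X H)) (hbB : b ∈ B)
    (c : ↥(FinSupp X H)) (hc : (c : X → H) x' ≠ 1) :
    IsMeagre {g : ↥(fixPt G ↥(FinSupp X H) (∅ : Set ↥(FinSupp X H))) |
      (fun i => (g : G) • (fun _ : Fin 1 => c) i) ∈
        orbitOver G ↥(FinSupp X H) ((∅ : Set ↥(FinSupp X H)) ∪ B) (fun _ : Fin 1 => c)} := by
  haveI : PolishSpace ↥(fixPt G ↥(FinSupp X H) (∅ : Set ↥(FinSupp X H))) :=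
    (aux_isClosed_fixPt hstab (∅ : Set ↥(FinSupp X H))).polishSpace
  have hsub : {g : ↥(fixPt G ↥(FinSupp X H) (∅ : Set ↥(FinSupp X H))) |
      (fun i => (g : G) • (fun _ : Fin 1 => c) i) ∈
        orbitOver G ↥(FinSupp X H) ((∅ : Set ↥(FinSupp X H)) ∪ B) (fun _ : Fin 1 => c)} ⊆
      ⋃ s ∈ (c : X → H) ⁻¹' {(c : X → H) x'},
        {g : ↥(fixPt G ↥(FinSupp X H) (∅ : Set ↥(FinSupp X H))) | g • s = x'} := by
    intro g hg
    obtain ⟨j, hj, hje⟩ := hg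
    have hjb : j • b = b := mem_fixPt.1 hj b (Set.mem_union_right _ hbB)
    have hjx : j • x' = x' := (aux_delta_stab hh₀ b hbval).1 hjb
    have hjc : j • c = (g : G) • c := congrFun hje 0
    have h2 : ((j • c : ↥(FinSupp X H)) : X → H) x' =
        (((g : G) • c : ↥(FinSupp X H)) : X → H) x' := by rw [hjc]
    rw [smul_finSupp_apply, smul_finSupp_apply] at h2
    have h3 : j⁻¹ • x' = x' := by rw [inv_smul_eq_iff]; exact hjx.symm
    rw [h3] at h2
    have h1 : (c : X → H) ((g : G)⁻¹ • x') = (c : X → H) x' := h2.symm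
    have hmem2 : g ∈ {g' : ↥(fixPt G ↥(FinSupp X H) (∅ : Set ↥(FinSupp X H))) |
        g' • ((g : G)⁻¹ • x') = x'} := by
      show g • ((g : G)⁻¹ • x') = x'
      exact smul_inv_smul _ _
    exact Set.mem_biUnion (h1 : ((g : G)⁻¹ • x') ∈ (c : X → H) ⁻¹' {(c : X → H) x'}) hmem2
  have hFc : ((c : X → H) ⁻¹' {(c : X → H) x'}).Countable := by
    refine ((aux_supp_finite c).subset ?_).countable
    intro z hz
    have hz' : (c : X → H) z = (c : X → H) x' := hz
    rw [Function.mem_mulSupport, hz']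
    exact hc
  refine IsMeagre.mono hsub (isMeagre_biUnion hFc ?_)
  intro s hs
  rcases Set.eq_empty_or_nonempty
    {g : ↥(fixPt G ↥(FinSupp X H) (∅ : Set ↥(FinSupp X H))) | g • s = x'} with he | ⟨g₀, hg₀⟩
  · rw [he]; exact IsMeagre.empty
  · refine isMeagre_coset x' ?_ ?_
    · show IsClosed {g : ↥(fixPt G ↥(FinSupp X H) (∅ : Set ↥(FinSupp X H))) | g • s = s}
      exact (hstab s).preimage continuous_subtype_val
    · intro hcnt
      apply hunc
      have hg₀x : (g₀ : G) • s = x' := hg₀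
      have horb : MulAction.orbit G x' = MulAction.orbit G s :=
        MulAction.orbit_eq_iff.2 ⟨g₀, hg₀x⟩
      rw [horb]
      refine Set.Countable.mono ?_ hcnt
      rintro _ ⟨k, rfl⟩
      refine ⟨⟨k, ?_⟩, rfl⟩
      exact mem_fixPt.2 fun y hy => absurd hy (Set.notMem_empty y)

/-- Let `(X,G)` be a small Polish structure with `X` uncountable, and `H` a
nontrivial countable group. Then in the small Polish group structure `(H(X),G)` no orbit is
nm-generic: for every `a ∈ H(X)` and finite `A ⊆ H(X)`, the orbit `o(a/A)` is neither left
nm-generic (i.e. it is not the case that for every `b` with `a ⫝_A {b}` one has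
`b * a ⫝_∅ A ∪ {b}`) nor right nm-generic. -/
theorem statement5 [TopologicalSpace G] [IsTopologicalGroup G] [PolishSpace G]
    [FaithfulSMul G X] (hstab : ∀ x : X, IsClosed {g : G | g • x = x})
    (hsmall : ∀ n : ℕ, Countable (Quotient (MulAction.orbitRel G (Fin n → X))))
    [Uncountable X] [Countable H] [Nontrivial H]
    (a : ↥(FinSupp X H)) (A : Finset ↥(FinSupp X H)) :
    ¬ (∀ b : ↥(FinSupp X H),
        NMIndep1 G ↥(FinSupp X H) a (A : Set ↥(FinSupp X H)) {b} →
        NMIndep1 G ↥(FinSupp X H) (b * a) ∅ ((A : Set ↥(FinSupp X H)) ∪ {b})) ∧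
    ¬ (∀ b : ↥(FinSupp X H),
        NMIndep1 G ↥(FinSupp X H) a (A : Set ↥(FinSupp X H)) {b} →
        NMIndep1 G ↥(FinSupp X H) (a * b) ∅ ((A : Set ↥(FinSupp X H)) ∪ {b})) := by
  classical
  obtain ⟨h₀, hh₀⟩ := exists_ne (1 : H)
  have hDfin : ((⋃ y ∈ (A : Set ↥(FinSupp X H)), Function.mulSupport (y : X → H)) ∪
      Function.mulSupport (a : X → H)).Finite :=
    (Set.Finite.biUnion A.finite_toSet fun y _ => aux_supp_finite y).union (aux_supp_finite a)
  obtain ⟨m, t, ht⟩ := hDfin.fin_param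
  have hfixA : ∀ g : G, (∀ i, g • t i = t i) →
      g ∈ fixPt G ↥(FinSupp X H) (A : Set ↥(FinSupp X H)) := by
    intro g hg
    rw [mem_fixPt]
    intro y hy
    apply aux_fix_of_fix_support
    intro z hz
    have hzD : z ∈ Set.range t := by
      rw [ht.2]
      exact Set.mem_union_left _ (Set.mem_biUnion hy hz)
    obtain ⟨i, rfl⟩ := hzD
    exact hg i
  have hfixa : ∀ g : G, (∀ i, g • t i = t i) → g • a = a := by
    intro g hg
    apply aux_fix_of_fix_support
    intro z hz
    have hzD : z ∈ Set.range t := by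
      rw [ht.2]
      exact Set.mem_union_right _ hz
    obtain ⟨i, rfl⟩ := hzD
    exact hg i
  haveI hPGA : PolishSpace ↥(fixPt G ↥(FinSupp X H) (A : Set ↥(FinSupp X H))) :=
    (aux_isClosed_fixPt hstab (A : Set ↥(FinSupp X H))).polishSpace
  haveI : Nonempty ↥(fixPt G ↥(FinSupp X H) (A : Set ↥(FinSupp X H))) := ⟨1⟩
  haveI : BaireSpace ↥(fixPt G ↥(FinSupp X H) (A : Set ↥(FinSupp X H))) := by
    letI := TopologicalSpace.upgradeIsCompletelyMetrizable ↥(fixPt G ↥(FinSupp X H) (A : Set ↥(FinSupp X H)))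
    infer_instance
  haveI hQc : Countable (Quotient (MulAction.orbitRel G (Fin (m+1) → X))) := hsmall (m+1)
  obtain ⟨x, hx⟩ := aux_exists_uncountable_fiber
    (fun z : X => Quotient.mk (MulAction.orbitRel G (Fin (m+1) → X)) (Fin.cons z t))
  obtain ⟨q, hq⟩ := exists_nonMeagre_fiber
    (fun g : ↥(fixPt G ↥(FinSupp X H) (A : Set ↥(FinSupp X H))) =>
      Quotient.mk (MulAction.orbitRel G (Fin (m+1) → X)) (Fin.cons ((g : G) • x) t))
  have hPne : ((fun g : ↥(fixPt G ↥(FinSupp X H) (A : Set ↥(FinSupp X H))) =>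
      Quotient.mk (MulAction.orbitRel G (Fin (m+1) → X)) (Fin.cons ((g : G) • x) t)) ⁻¹'
        {q}).Nonempty := by
    rcases Set.eq_empty_or_nonempty ((fun g : ↥(fixPt G ↥(FinSupp X H) (A : Set ↥(FinSupp X H))) =>
        Quotient.mk (MulAction.orbitRel G (Fin (m+1) → X)) (Fin.cons ((g : G) • x) t)) ⁻¹'
          {q}) with he | hne
    · exfalso; apply hq; rw [he]; exact IsMeagre.empty
    · exact hne
  obtain ⟨gg, hgg⟩ := hPne
  have hggq : Quotient.mk (MulAction.orbitRel G (Fin (m+1) → X)) (Fin.cons ((gg : G) • x) t) = q :=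
    hgg
  have hGAx : ¬ (Set.range fun g : ↥(fixPt G ↥(FinSupp X H) (A : Set ↥(FinSupp X H))) =>
      (g : G) • x).Countable := by
    intro hcnt
    apply hx
    refine Set.Countable.mono ?_ hcnt
    intro z hz
    obtain ⟨g, hgt, hgx⟩ := aux_fiber t hz
    exact ⟨⟨g, hfixA g hgt⟩, hgx⟩
  have hclGA : IsClosed {g : ↥(fixPt G ↥(FinSupp X H) (A : Set ↥(FinSupp X H))) | g • x = x} :=
    (hstab x).preimage continuous_subtype_val
  -- the value of a at x' := gg • x is not h₀⁻¹
  have hval : (a : X → H) ((gg : G) • x) ≠ h₀⁻¹ := by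
    intro hv
    apply hq
    have hsub : (fun g : ↥(fixPt G ↥(FinSupp X H) (A : Set ↥(FinSupp X H))) =>
        Quotient.mk (MulAction.orbitRel G (Fin (m+1) → X)) (Fin.cons ((g : G) • x) t)) ⁻¹' {q} ⊆
        ⋃ s ∈ Function.mulSupport (a : X → H),
          {g : ↥(fixPt G ↥(FinSupp X H) (A : Set ↥(FinSupp X H))) | g • x = s} := by
      intro g hg
      have hfq : Quotient.mk (MulAction.orbitRel G (Fin (m+1) → X)) (Fin.cons ((gg : G) • x) t) =
          Quotient.mk (MulAction.orbitRel G (Fin (m+1) → X)) (Fin.cons ((g : G) • x) t) := by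
        rw [hggq]
        exact (hg : _ = q).symm
      obtain ⟨k, hkt, hkx⟩ := aux_fiber t hfq
      have hka : k • a = a := hfixa k hkt
      have hvv : (a : X → H) ((g : G) • x) = (a : X → H) ((gg : G) • x) := by
        rw [← hkx]
        exact (aux_fix_apply hka ((g : G) • x)).symm
      have hmem1 : ((g : G) • x) ∈ Function.mulSupport (a : X → H) := by
        rw [Function.mem_mulSupport, hvv, hv]
        exact inv_ne_one.2 hh₀
      have hmem2 : g ∈ {g' : ↥(fixPt G ↥(FinSupp X H) (A : Set ↥(FinSupp X H))) |
          g' • x = (g : G) • x} := rfl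
      exact Set.mem_biUnion hmem1 hmem2
    exact IsMeagre.mono hsub (isMeagre_biUnion (aux_supp_finite a).countable
      (fun s _ => isMeagre_coset s hclGA hGAx))
  -- uncountability of the orbit of x'
  have huncx' : ¬ (MulAction.orbit G ((gg : G) • x)).Countable := by
    intro hcnt
    apply hx
    refine Set.Countable.mono ?_ hcnt
    intro z hz
    obtain ⟨k, hkt, hkx⟩ := aux_fiber t hz
    refine ⟨k * (gg : G)⁻¹, ?_⟩
    show (k * (gg : G)⁻¹) • ((gg : G) • x) = z
    rw [mul_smul, inv_smul_smul]
    exact hkx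
  -- define b
  have hbmem : (fun z : X => if z = (gg : G) • x then h₀ else 1) ∈ FinSupp X H := by
    show (Function.mulSupport fun z : X => if z = (gg : G) • x then h₀ else 1).Finite
    apply Set.Finite.subset (Set.finite_singleton ((gg : G) • x))
    intro z hz
    rw [Set.mem_singleton_iff]
    by_contra hne
    exact hz (if_neg hne)
  have hindep : NMIndep1 G ↥(FinSupp X H) a (A : Set ↥(FinSupp X H)) {(⟨_, hbmem⟩ :
      ↥(FinSupp X H))} := by
    intro hmeag
    apply hq
    have himg : ⇑((Homeomorph.inv ↥(fixPt G ↥(FinSupp X H) (A : Set ↥(FinSupp X H)))).trans (Homeomorph.mulLeft gg)) ''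
        ((fun g : ↥(fixPt G ↥(FinSupp X H) (A : Set ↥(FinSupp X H))) =>
          Quotient.mk (MulAction.orbitRel G (Fin (m+1) → X)) (Fin.cons ((g : G) • x) t)) ⁻¹'
            {q}) ⊆
        {g : ↥(fixPt G ↥(FinSupp X H) (A : Set ↥(FinSupp X H))) |
          (fun i => (g : G) • (fun _ : Fin 1 => a) i) ∈
            orbitOver G ↥(FinSupp X H)
              ((A : Set ↥(FinSupp X H)) ∪ {(⟨_, hbmem⟩ : ↥(FinSupp X H))})
              (fun _ : Fin 1 => a)} := by
      rintro _ ⟨g, hg, rfl⟩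
      have hfq : Quotient.mk (MulAction.orbitRel G (Fin (m+1) → X)) (Fin.cons ((gg : G) • x) t) =
          Quotient.mk (MulAction.orbitRel G (Fin (m+1) → X)) (Fin.cons ((g : G) • x) t) := by
        rw [hggq]
        exact (hg : _ = q).symm
      obtain ⟨k, hkt, hkx⟩ := aux_fiber t hfq
      refine ⟨(gg : G) * (g : G)⁻¹ * k⁻¹, ?_, ?_⟩
      · rw [mem_fixPt]
        rintro y hy
        rcases hy with hy | hy
        · have h1 : k⁻¹ • y = y := by
            rw [inv_smul_eq_iff]
            exact (mem_fixPt.1 (hfixA k hkt) y hy).symm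
          have h2 : (g : G)⁻¹ • y = y := by
            rw [inv_smul_eq_iff]
            exact (g.2 y hy).symm
          rw [mul_smul, mul_smul, h1, h2]
          exact gg.2 y hy
        · rw [Set.mem_singleton_iff] at hy
          subst hy
          rw [aux_delta_stab hh₀ (⟨_, hbmem⟩ : ↥(FinSupp X H)) rfl]
          have h1 : k⁻¹ • ((gg : G) • x) = (g : G) • x := by
            rw [inv_smul_eq_iff]
            exact hkx.symm
          rw [mul_smul, mul_smul, h1, inv_smul_smul]
      · have hev : ((Homeomorph.inv ↥(fixPt G ↥(FinSupp X H) (A : Set ↥(FinSupp X H)))).trans (Homeomorph.mulLeft gg)) g = gg * g⁻¹ := rfl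
        rw [hev]
        funext i
        show ((gg : G) * (g : G)⁻¹ * k⁻¹) • a = ((gg * g⁻¹ :
          ↥(fixPt G ↥(FinSupp X H) (A : Set ↥(FinSupp X H)))) : G) • a
        have hka : k⁻¹ • a = a := by
          rw [inv_smul_eq_iff]
          exact (hfixa k hkt).symm
        rw [mul_smul, hka]
        rfl
    have h1 := hmeag.mono himg
    have h2 := isMeagre_image_homeomorph ((Homeomorph.inv ↥(fixPt G ↥(FinSupp X H) (A : Set ↥(FinSupp X H)))).trans (Homeomorph.mulLeft gg)).symm h1
    rw [← Set.image_comp, Homeomorph.symm_comp_self, Set.image_id] at h2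
    exact h2
  constructor
  · intro hgen
    have h1 := hgen (⟨fun z : X => if z = (gg : G) • x then h₀ else 1, hbmem⟩ : ↥(FinSupp X H)) hindep
    have hco : ((((⟨fun z : X => if z = (gg : G) • x then h₀ else 1, hbmem⟩ : ↥(FinSupp X H)) * a : ↥(FinSupp X H))) : X → H) ((gg : G) • x) =
        (if (gg : G) • x = (gg : G) • x then h₀ else 1) * (a : X → H) ((gg : G) • x) := rfl
    have hc1 : ((((⟨fun z : X => if z = (gg : G) • x then h₀ else 1, hbmem⟩ : ↥(FinSupp X H)) * a : ↥(FinSupp X H))) : X → H) ((gg : G) • x) ≠ 1 := by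
      rw [hco, if_pos rfl]
      intro heq
      exact hval (eq_inv_of_mul_eq_one_right heq)
    have hdep := aux_dep hstab huncx' hh₀ (⟨fun z : X => if z = (gg : G) • x then h₀ else 1, hbmem⟩ : ↥(FinSupp X H)) rfl
      ((A : Set ↥(FinSupp X H)) ∪ {(⟨fun z : X => if z = (gg : G) • x then h₀ else 1, hbmem⟩ : ↥(FinSupp X H))}) (Set.mem_union_right _ rfl)
      ((⟨fun z : X => if z = (gg : G) • x then h₀ else 1, hbmem⟩ : ↥(FinSupp X H)) * a) hc1
    exact h1 hdep
  · intro hgen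
    have h1 := hgen (⟨fun z : X => if z = (gg : G) • x then h₀ else 1, hbmem⟩ : ↥(FinSupp X H)) hindep
    have hco : (((a * (⟨fun z : X => if z = (gg : G) • x then h₀ else 1, hbmem⟩ : ↥(FinSupp X H)) : ↥(FinSupp X H))) : X → H) ((gg : G) • x) =
        (a : X → H) ((gg : G) • x) * (if (gg : G) • x = (gg : G) • x then h₀ else 1) := rfl
    have hc1 : (((a * (⟨fun z : X => if z = (gg : G) • x then h₀ else 1, hbmem⟩ : ↥(FinSupp X H)) : ↥(FinSupp X H))) : X → H) ((gg : G) • x) ≠ 1 := by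
      rw [hco, if_pos rfl]
      intro heq
      exact hval (eq_inv_of_mul_eq_one_left heq)
    have hdep := aux_dep hstab huncx' hh₀ (⟨fun z : X => if z = (gg : G) • x then h₀ else 1, hbmem⟩ : ↥(FinSupp X H)) rfl
      ((A : Set ↥(FinSupp X H)) ∪ {(⟨fun z : X => if z = (gg : G) • x then h₀ else 1, hbmem⟩ : ↥(FinSupp X H))}) (Set.mem_union_right _ rfl)
      (a * (⟨fun z : X => if z = (gg : G) • x then h₀ else 1, hbmem⟩ : ↥(FinSupp X H))) hc1
    exact h1 hdep
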